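/- Fix d, T ∈ ℕ with T ≥ 1, reals L > 0 and C > 0, and for each t ∈ {1,…,T+1} a nonempty closed convex set K_t ⊆ { q ∈ ℝ^d : 0 ≤ q_j ≤ 1 for all j, and Σ_j q_j ≤ L }. Let ℓ_1,…,ℓ_T ∈ ℝ^d satisfy ℓ̄_t := max_{τ ≤ t} ‖ℓ_τ‖_∞ > 0 for all t, let q̂_1 ∈ K_1, and define q̂_{t+1} = Π_{K_{t+1}}(q̂_t − η_t ℓ_t) with η_t = 1/(ℓ̄_t C √T). Then for every q ∈ ⋂_t K_t and every interval 1 ≤ t₁ ≤ t₂ ≤ T: Σ_{t=t₁}^{t₂} ℓ_tᵀ(q̂_t − q) ≤ L·ℓ̄_{t₂}·C·√T + (d/2)·ℓ̄_{t₁,t₂}·(t₂−t₁+1)/(C√T), where ℓ̄_{t₁,t₂} := max_{t₁ ≤ t ≤ t₂} ‖ℓ_t‖_∞. -/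

import Mathlib

open Finset Matrix

/-- The ℓ₁ norm on `ℝ^d`. -/
noncomputable def l1 {d : ℕ} (x : Fin d → ℝ) : ℝ := ∑ i, |x i|

/-- The ℓ∞ norm on `ℝ^d`. -/
noncomputable def linf {d : ℕ} (x : Fin d → ℝ) : ℝ := ⨆ i, |x i|

/-- Dot product on `ℝ^d`. -/
noncomputable def dotp {d : ℕ} (x y : Fin d → ℝ) : ℝ := ∑ i, x i * y i

/-- Squared Euclidean distance on `ℝ^d`. -/
noncomputable def sqdist {d : ℕ} (x y : Fin d → ℝ) : ℝ := ∑ i, (x i - y i) ^ 2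

/-- `z` is the Euclidean (metric) projection of `p` onto `K`. -/
def IsEuclidProj {d : ℕ} (K : Set (Fin d → ℝ)) (p z : Fin d → ℝ) : Prop :=
  z ∈ K ∧ ∀ y ∈ K, sqdist z p ≤ sqdist y p

/-- `intervalMax ℓ a b = max_{a ≤ t ≤ b} ‖ℓ_t‖_∞` (as the supremum of a finite nonempty set
of reals, for `a ≤ b`). -/
noncomputable def intervalMax {d : ℕ} (ℓ : ℕ → Fin d → ℝ) (a b : ℕ) : ℝ :=
  sSup ((fun t => linf (ℓ t)) '' Set.Icc a b)

lemma my_sqdist_nonneg {d : ℕ} (x y : Fin d → ℝ) : 0 ≤ sqdist x y :=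
  Finset.sum_nonneg fun _ _ => sq_nonneg _

lemma my_linf_nonneg {d : ℕ} (x : Fin d → ℝ) : 0 ≤ linf x :=
  Real.iSup_nonneg fun _ => abs_nonneg _

lemma my_abs_le_linf {d : ℕ} (x : Fin d → ℝ) (j : Fin d) : |x j| ≤ linf x := by
  exact le_ciSup (Set.Finite.bddAbove (Set.finite_range (fun i => |x i|))) j

lemma my_linf_le_intervalMax {d : ℕ} (ℓ : ℕ → Fin d → ℝ) {a b t : ℕ} (h1 : a ≤ t) (h2 : t ≤ b) :
    linf (ℓ t) ≤ intervalMax ℓ a b :=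
  le_csSup (((Set.finite_Icc a b).image _).bddAbove) ⟨t, ⟨h1, h2⟩, rfl⟩

lemma my_intervalMax_nonneg {d : ℕ} (ℓ : ℕ → Fin d → ℝ) {a b : ℕ} (h : a ≤ b) :
    0 ≤ intervalMax ℓ a b :=
  le_trans (my_linf_nonneg _) (my_linf_le_intervalMax ℓ le_rfl h)

lemma my_intervalMax_mono {d : ℕ} (ℓ : ℕ → Fin d → ℝ) {a b c : ℕ} (hab : a ≤ b) (hbc : b ≤ c) :
    intervalMax ℓ a b ≤ intervalMax ℓ a c :=
  csSup_le_csSup (((Set.finite_Icc a c).image _).bddAbove)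
    ⟨_, ⟨a, ⟨le_rfl, hab⟩, rfl⟩⟩ (Set.image_mono (Set.Icc_subset_Icc_right hbc))

lemma my_proj_sqdist_le {d : ℕ} {K : Set (Fin d → ℝ)} (hK : Convex ℝ K)
    {p z q : Fin d → ℝ} (hz : IsEuclidProj K p z) (hq : q ∈ K) :
    sqdist z q ≤ sqdist p q := by
  set A := ∑ j, (z j - p j) * (q j - z j) with hA
  set B := sqdist q z with hB
  have hB0 : 0 ≤ B := my_sqdist_nonneg _ _
  have key : ∀ s : ℝ, 0 ≤ s → s ≤ 1 → 0 ≤ 2*s*A + s^2*B := by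
    intro s hs0 hs1
    have hy : (fun j => z j + s * (q j - z j)) ∈ K := by
      have h := hK hz.1 hq (by linarith : (0:ℝ) ≤ 1 - s) hs0 (by ring)
      convert h using 1
      funext j
      simp only [Pi.add_apply, Pi.smul_apply, smul_eq_mul]
      ring
    have h2 := hz.2 _ hy
    have expand : sqdist (fun j => z j + s * (q j - z j)) p
        = sqdist z p + (2*s*A + s^2*B) := by
      rw [hA, hB]
      unfold sqdist
      rw [Finset.mul_sum, Finset.mul_sum, ← Finset.sum_add_distrib, ← Finset.sum_add_distrib]
      exact Finset.sum_congr rfl fun j _ => by ring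
    rw [expand] at h2
    linarith
  have hA0 : 0 ≤ A := by
    by_contra h
    push_neg at h
    set s : ℝ := min 1 (-A / (B + 1)) with hs
    have hs0 : 0 < s := lt_min one_pos (div_pos (by linarith) (by linarith))
    have hsB : s * B ≤ -A := by
      calc s * B ≤ (-A/(B+1)) * B := mul_le_mul_of_nonneg_right (min_le_right _ _) hB0
        _ ≤ -A := by
          rw [div_mul_eq_mul_div, div_le_iff₀ (by linarith)]
          nlinarith
    have hk := key s hs0.le (min_le_left _ _)
    nlinarith
  have expand2 : sqdist p q = sqdist z p + 2*A + sqdist z q := by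
    rw [hA]
    unfold sqdist
    rw [Finset.mul_sum, ← Finset.sum_add_distrib, ← Finset.sum_add_distrib]
    exact Finset.sum_congr rfl fun j _ => by ring
  linarith [my_sqdist_nonneg z p]

lemma my_ogd_expand {d : ℕ} (x q v : Fin d → ℝ) (η : ℝ) :
    sqdist (fun j => x j - η * v j) q
      = sqdist x q - 2*η * dotp v (fun j => x j - q j) + η^2 * ∑ j, (v j)^2 := by
  unfold sqdist dotp
  rw [Finset.mul_sum, Finset.mul_sum, ← Finset.sum_sub_distrib, ← Finset.sum_add_distrib]
  exact Finset.sum_congr rfl fun j _ => by ring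

lemma my_sqdist_le_two_mul {d : ℕ} {x y : Fin d → ℝ} {L : ℝ}
    (hx1 : ∀ j, 0 ≤ x j ∧ x j ≤ 1) (hx2 : ∑ j, x j ≤ L)
    (hy1 : ∀ j, 0 ≤ y j ∧ y j ≤ 1) (hy2 : ∑ j, y j ≤ L) :
    sqdist x y ≤ 2 * L := by
  have h : ∀ j, (x j - y j)^2 ≤ x j + y j := fun j => by
    obtain ⟨a, b⟩ := hx1 j; obtain ⟨c, e⟩ := hy1 j; nlinarith
  calc sqdist x y ≤ ∑ j, (x j + y j) := Finset.sum_le_sum fun j _ => h j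
    _ = ∑ j, x j + ∑ j, y j := Finset.sum_add_distrib
    _ ≤ 2*L := by linarith

/-- Interval-regret bound for projected online gradient descent with adaptive learning
rate `η_t = 1/(ℓ̄_t C √T)`. -/
theorem stmt3 {d : ℕ} (T : ℕ) (hT : 1 ≤ T) (L C : ℝ) (hL : 0 < L) (hC : 0 < C)
    (K : ℕ → Set (Fin d → ℝ))
    (hKne : ∀ t ∈ Finset.Icc 1 (T + 1), (K t).Nonempty)
    (hKcl : ∀ t ∈ Finset.Icc 1 (T + 1), IsClosed (K t))
    (hKcv : ∀ t ∈ Finset.Icc 1 (T + 1), Convex ℝ (K t))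
    (hKsub : ∀ t ∈ Finset.Icc 1 (T + 1),
      K t ⊆ {q : Fin d → ℝ | (∀ j, 0 ≤ q j ∧ q j ≤ 1) ∧ ∑ j, q j ≤ L})
    (ℓ : ℕ → Fin d → ℝ)
    (hpos : ∀ t ∈ Finset.Icc 1 T, 0 < intervalMax ℓ 1 t)
    (qh : ℕ → Fin d → ℝ)
    (hq1 : qh 1 ∈ K 1)
    (hupd : ∀ t ∈ Finset.Icc 1 T,
      IsEuclidProj (K (t + 1))
        (fun j => qh t j - (1 / (intervalMax ℓ 1 t * C * Real.sqrt T)) * ℓ t j)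
        (qh (t + 1)))
    (q : Fin d → ℝ) (hq : ∀ t ∈ Finset.Icc 1 (T + 1), q ∈ K t)
    (t₁ t₂ : ℕ) (h1 : 1 ≤ t₁) (h12 : t₁ ≤ t₂) (h2T : t₂ ≤ T) :
    ∑ t ∈ Finset.Icc t₁ t₂, dotp (ℓ t) (fun j => qh t j - q j) ≤
      L * intervalMax ℓ 1 t₂ * C * Real.sqrt T +
        (d / 2) * intervalMax ℓ t₁ t₂ * ((t₂ : ℝ) - t₁ + 1) / (C * Real.sqrt T) := by
  have hsT : 0 < Real.sqrt T := Real.sqrt_pos.mpr (by exact_mod_cast Nat.lt_of_lt_of_le Nat.zero_lt_one hT)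
  have hM0 : 0 ≤ intervalMax ℓ t₁ t₂ := my_intervalMax_nonneg ℓ h12
  have hαpos : ∀ t, 1 ≤ t → t ≤ T → 0 < intervalMax ℓ 1 t * C * Real.sqrt T := fun t ha hb =>
    mul_pos (mul_pos (hpos t (Finset.mem_Icc.mpr ⟨ha, hb⟩)) hC) hsT
  have hαmono : ∀ t, 1 ≤ t → intervalMax ℓ 1 t * C * Real.sqrt T
      ≤ intervalMax ℓ 1 (t+1) * C * Real.sqrt T := fun t ha =>
    mul_le_mul_of_nonneg_right (mul_le_mul_of_nonneg_right
      (my_intervalMax_mono ℓ ha (Nat.le_succ t)) hC.le) hsT.le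
  have hmem : ∀ t, 1 ≤ t → t ≤ T + 1 → qh t ∈ K t := by
    intro t ht
    induction t, ht using Nat.le_induction with
    | base => intro _; exact hq1
    | succ n hn ih => intro h; exact (hupd n (Finset.mem_Icc.mpr ⟨hn, by omega⟩)).1
  have hDle : ∀ t, 1 ≤ t → t ≤ T + 1 → sqdist (qh t) q ≤ 2 * L := by
    intro t ha hb
    have hx := hKsub t (Finset.mem_Icc.mpr ⟨ha, hb⟩) (hmem t ha hb)
    have hy := hKsub t (Finset.mem_Icc.mpr ⟨ha, hb⟩) (hq t (Finset.mem_Icc.mpr ⟨ha, hb⟩))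
    exact my_sqdist_le_two_mul hx.1 hx.2 hy.1 hy.2
  -- per-step inequality
  have hstep : ∀ t, t₁ ≤ t → t ≤ t₂ →
      dotp (ℓ t) (fun j => qh t j - q j) ≤
        intervalMax ℓ 1 t * C * Real.sqrt T / 2 * (sqdist (qh t) q - sqdist (qh (t+1)) q)
          + (d : ℝ) * intervalMax ℓ t₁ t₂ / (2 * (C * Real.sqrt T)) := by
    intro t ha hb
    have h1t : 1 ≤ t := le_trans h1 ha
    have htT : t ≤ T := le_trans hb h2T
    set a := intervalMax ℓ 1 t * C * Real.sqrt T with hadef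
    have hat : 0 < a := hαpos t h1t htT
    have hproj := hupd t (Finset.mem_Icc.mpr ⟨h1t, htT⟩)
    have hKconv := hKcv (t+1) (Finset.mem_Icc.mpr ⟨by omega, by omega⟩)
    have hqmem := hq (t+1) (Finset.mem_Icc.mpr ⟨by omega, by omega⟩)
    have hle := my_proj_sqdist_le hKconv hproj hqmem
    rw [my_ogd_expand (qh t) q (ℓ t) (1/a)] at hle
    have hℓpos : 0 < intervalMax ℓ 1 t := hpos t (Finset.mem_Icc.mpr ⟨h1t, htT⟩)
    have hS : ∑ j, (ℓ t j)^2 ≤ (d : ℝ) * (intervalMax ℓ 1 t * intervalMax ℓ t₁ t₂) := by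
      have hb1 : ∀ j, (ℓ t j)^2 ≤ intervalMax ℓ 1 t * intervalMax ℓ t₁ t₂ := by
        intro j
        have ha1 : |ℓ t j| ≤ intervalMax ℓ 1 t :=
          le_trans (my_abs_le_linf _ j) (my_linf_le_intervalMax ℓ h1t le_rfl)
        have ha2 : |ℓ t j| ≤ intervalMax ℓ t₁ t₂ :=
          le_trans (my_abs_le_linf _ j) (my_linf_le_intervalMax ℓ ha hb)
        calc (ℓ t j)^2 = |ℓ t j| * |ℓ t j| := by rw [← sq_abs]; ring
          _ ≤ intervalMax ℓ 1 t * intervalMax ℓ t₁ t₂ :=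
            mul_le_mul ha1 ha2 (abs_nonneg _) hℓpos.le
      calc ∑ j, (ℓ t j)^2 ≤ ∑ _j : Fin d, (intervalMax ℓ 1 t * intervalMax ℓ t₁ t₂) :=
            Finset.sum_le_sum fun j _ => hb1 j
        _ = (d : ℝ) * (intervalMax ℓ 1 t * intervalMax ℓ t₁ t₂) := by
            rw [Finset.sum_const, Finset.card_univ, Fintype.card_fin, nsmul_eq_mul]
    have he : a * (1/a) = 1 := mul_one_div_cancel hat.ne'
    have h2 : a * sqdist (qh (t+1)) q ≤ a * sqdist (qh t) q
        - 2 * dotp (ℓ t) (fun j => qh t j - q j) + (1/a) * ∑ j, (ℓ t j)^2 := by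
      have h3 := mul_le_mul_of_nonneg_left hle hat.le
      calc a * sqdist (qh (t+1)) q
          ≤ a * (sqdist (qh t) q - 2*(1/a) * dotp (ℓ t) (fun j => qh t j - q j)
              + (1/a)^2 * ∑ j, (ℓ t j)^2) := h3
        _ = a * sqdist (qh t) q - 2*(a*(1/a)) * dotp (ℓ t) (fun j => qh t j - q j)
              + (a*(1/a))*((1/a) * ∑ j, (ℓ t j)^2) := by ring
        _ = _ := by rw [he]; ring
    have hX : dotp (ℓ t) (fun j => qh t j - q j) ≤
        a / 2 * (sqdist (qh t) q - sqdist (qh (t+1)) q) + (1/a) / 2 * ∑ j, (ℓ t j)^2 := by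
      linarith
    have hfinal : (1/a) / 2 * ((d:ℝ) * (intervalMax ℓ 1 t * intervalMax ℓ t₁ t₂))
        = (d : ℝ) * intervalMax ℓ t₁ t₂ / (2 * (C * Real.sqrt T)) := by
      rw [hadef]
      field_simp
    have hSle : (1/a) / 2 * ∑ j, (ℓ t j)^2
        ≤ (d : ℝ) * intervalMax ℓ t₁ t₂ / (2 * (C * Real.sqrt T)) := by
      rw [← hfinal]
      exact mul_le_mul_of_nonneg_left hS (by positivity)
    linarith
  -- telescoping
  have tele : ∀ n, t₁ ≤ n → n ≤ T →
      ∑ t ∈ Finset.Icc t₁ n,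
          intervalMax ℓ 1 t * C * Real.sqrt T / 2 * (sqdist (qh t) q - sqdist (qh (t+1)) q)
        ≤ L * (intervalMax ℓ 1 n * C * Real.sqrt T)
          - intervalMax ℓ 1 n * C * Real.sqrt T / 2 * sqdist (qh (n+1)) q := by
    intro n hn
    induction n, hn using Nat.le_induction with
    | base =>
      intro hT'
      rw [Finset.Icc_self, Finset.sum_singleton]
      have hD1 : sqdist (qh t₁) q ≤ 2*L := hDle t₁ h1 (by omega)
      have ha := hαpos t₁ h1 hT'
      nlinarith
    | succ n hn ih =>
      intro hT'
      have hnT : n ≤ T := by omega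
      have ih' := ih hnT
      rw [Finset.sum_Icc_succ_top (by omega : t₁ ≤ n+1)]
      have hmono := hαmono n (by omega)
      have hDn : sqdist (qh (n+1)) q ≤ 2*L := hDle (n+1) (by omega) (by omega)
      have hD0 : 0 ≤ sqdist (qh (n+1)) q := my_sqdist_nonneg _ _
      nlinarith
  -- assemble
  have hsum : ∑ t ∈ Finset.Icc t₁ t₂, dotp (ℓ t) (fun j => qh t j - q j)
      ≤ ∑ t ∈ Finset.Icc t₁ t₂,
          (intervalMax ℓ 1 t * C * Real.sqrt T / 2 * (sqdist (qh t) q - sqdist (qh (t+1)) q)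
            + (d : ℝ) * intervalMax ℓ t₁ t₂ / (2 * (C * Real.sqrt T))) :=
    Finset.sum_le_sum fun t ht =>
      hstep t (Finset.mem_Icc.mp ht).1 (Finset.mem_Icc.mp ht).2
  rw [Finset.sum_add_distrib, Finset.sum_const, Nat.card_Icc, nsmul_eq_mul] at hsum
  have hcard : ((t₂ + 1 - t₁ : ℕ) : ℝ) = (t₂ : ℝ) - t₁ + 1 := by
    rw [Nat.cast_sub (by omega)]
    push_cast
    ring
  rw [hcard] at hsum
  have htele := tele t₂ h12 h2T
  have hDlast : 0 ≤ sqdist (qh (t₂+1)) q := my_sqdist_nonneg _ _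
  have hαT := hαpos t₂ (by omega) h2T
  have heq : ((t₂:ℝ) - t₁ + 1) * ((d:ℝ) * intervalMax ℓ t₁ t₂ / (2 * (C * Real.sqrt T)))
      = (d / 2) * intervalMax ℓ t₁ t₂ * ((t₂ : ℝ) - t₁ + 1) / (C * Real.sqrt T) := by
    field_simp
  nlinarith [hsum, htele, heq]
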